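/- Let t_0 ∉ supp(ν) ∪ Θ be such that ∫ dν(x)/(t_0−x)² = 1 and ∫ dν(x)/(t_0−x)³ ≠ 0. Then for ε > 0 small enough and all N large enough there exists one and only one t_0(N) ∈ ]t_0−ε, t_0+ε[ with ∫ dμ_{A_N}(x)/(t_0(N)−x)² = 1, and it satisfies the fixed-point identity t_0(N) = t_0 + f_N(t_0(N)), where f_N(t) = h(t)·[ ((N−r)/N) ∫ dν̂_N(x)/(t−x)² − ∫ dν(x)/(t−x)² + (1/N) Σ_{j=1}^J k_j/(t−θ_j)² ], h(t) = 1 / ∫ ((t−x) + (t_0−x)) / ((t−x)²(t_0−x)²) dν(x), and there exist constants 0 < K_1(ε) < K_2(ε) with K_1(ε) < |h(t)| < K_2(ε) for all t ∈ ]t_0−ε, t_0+ε[. -/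

import Mathlib

open MeasureTheory Filter Topology Set
open scoped ENNReal

/-- `v_μ(u) = inf {v ≥ 0 : ∫ dμ(x)/((u−x)² + v²) ≤ 1}`. -/
noncomputable def vF (μ : Measure ℝ) (u : ℝ) : ℝ :=
  sInf {v : ℝ | 0 ≤ v ∧ ∫ x, ((u - x) ^ 2 + v ^ 2)⁻¹ ∂μ ≤ 1}

/-- `U_μ = {t : v_μ(t) > 0}`. -/
def USet (μ : Measure ℝ) : Set ℝ := {t | 0 < vF μ t}

/-- `H_μ(z) = z + ∫ dμ(x)/(z−x)`. -/
noncomputable def HF (μ : Measure ℝ) (z : ℝ) : ℝ := z + ∫ x, (z - x)⁻¹ ∂μ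

/-- `Ψ_μ(t) = t + ∫ (t−x) dμ(x)/((t−x)² + v_μ(t)²)`. -/
noncomputable def PsiF (μ : Measure ℝ) (t : ℝ) : ℝ :=
  t + ∫ x, (t - x) / ((t - x) ^ 2 + vF μ t ^ 2) ∂μ

/-- The (topological) support of a measure on ℝ. -/
def MeasSupp (μ : Measure ℝ) : Set ℝ := {x | ∀ U ∈ nhds x, μ U ≠ 0}

/-- `ν̂_N = (1/(N−r)) Σ_{j=1}^{N−r} δ_{β_j(N)}`. -/
noncomputable def hatNu (r : ℕ) (β : ℕ → ℕ → ℝ) (N : ℕ) : Measure ℝ :=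
  ((N - r : ℕ) : ℝ≥0∞)⁻¹ • ∑ i ∈ Finset.range (N - r), Measure.dirac (β N i)

/-- `h(t) = 1 / ∫ ((t−x)+(t₀−x))/((t−x)²(t₀−x)²) dν(x)`. -/
noncomputable def hWeight (ν : Measure ℝ) (t₀ t : ℝ) : ℝ :=
  (∫ x, ((t - x) + (t₀ - x)) / ((t - x) ^ 2 * (t₀ - x) ^ 2) ∂ν)⁻¹

/-- `f_N(t) = h(t)·[((N−r)/N)∫dν̂_N(x)/(t−x)² − ∫dν(x)/(t−x)² + (1/N)Σ_j k_j/(t−θ_j)²]`. -/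
noncomputable def fN (ν : Measure ℝ) {J : ℕ} (r : ℕ) (θ : Fin J → ℝ) (k : Fin J → ℕ)
    (β : ℕ → ℕ → ℝ) (t₀ : ℝ) (N : ℕ) (t : ℝ) : ℝ :=
  hWeight ν t₀ t *
    (((N - r : ℕ) : ℝ) / N * (∫ x, ((t - x) ^ 2)⁻¹ ∂(hatNu r β N))
      - (∫ x, ((t - x) ^ 2)⁻¹ ∂ν)
      + (N : ℝ)⁻¹ * ∑ j, (k j : ℝ) / (t - θ j) ^ 2)


noncomputable def qc (ρ y : ℝ) : ℝ := (max (y ^ 2) (ρ ^ 2))⁻¹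
noncomputable def pc (ρ y : ℝ) : ℝ := y * qc ρ y
noncomputable def psiK (ρ t t' x : ℝ) : ℝ :=
  pc ρ (t - x) * qc ρ (t' - x) + qc ρ (t - x) * pc ρ (t' - x)

variable {ρ y z t t' s s' x : ℝ}

lemma max_sq_pos (hρ : 0 < ρ) : 0 < max (y ^ 2) (ρ ^ 2) :=
  lt_of_lt_of_le (pow_pos hρ 2) (le_max_right _ _)

lemma qc_pos (hρ : 0 < ρ) : 0 < qc ρ y := inv_pos.2 (max_sq_pos hρ)

lemma qc_le (hρ : 0 < ρ) : qc ρ y ≤ (ρ ^ 2)⁻¹ :=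
  inv_anti₀ (pow_pos hρ 2) (le_max_right _ _)

lemma abs_qc_le (hρ : 0 < ρ) : |qc ρ y| ≤ (ρ ^ 2)⁻¹ := by
  rw [abs_of_pos (qc_pos hρ)]; exact qc_le hρ

lemma sq_mul_qc_le_one (hρ : 0 < ρ) : y ^ 2 * qc ρ y ≤ 1 := by
  rw [qc]
  rw [mul_inv_le_iff₀ (max_sq_pos hρ), one_mul]
  exact le_max_left _ _

lemma abs_y_mul_qc_le (hρ : 0 < ρ) : |y| * qc ρ y ≤ ρ⁻¹ := by
  rcases le_or_gt (|y|) ρ with h | h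
  · have h1 : |y| * qc ρ y ≤ ρ * (ρ ^ 2)⁻¹ :=
      mul_le_mul h (qc_le hρ) (qc_pos hρ).le hρ.le
    have h2 : ρ * (ρ ^ 2)⁻¹ = ρ⁻¹ := by field_simp
    linarith [h2 ▸ h1]
  · have hy : (0:ℝ) < |y| := hρ.trans h
    have hsq : ρ ^ 2 ≤ y ^ 2 := by nlinarith [sq_abs y, abs_nonneg y]
    have h1 : qc ρ y = (y ^ 2)⁻¹ := by rw [qc, max_eq_left hsq]
    have hyne : |y| ≠ 0 := hy.ne'
    rw [h1, ← sq_abs]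
    have heq : |y| * (|y| ^ 2)⁻¹ = |y|⁻¹ := by
      rw [sq, mul_inv, ← mul_assoc, mul_inv_cancel₀ hyne, one_mul]
    rw [heq]
    exact inv_anti₀ hρ h.le

lemma abs_pc_le (hρ : 0 < ρ) : |pc ρ y| ≤ ρ⁻¹ := by
  have := abs_y_mul_qc_le (y := y) hρ
  rwa [pc, abs_mul, abs_of_pos (qc_pos hρ)]

lemma qc_eq (hρ : 0 < ρ) (h : ρ ≤ |y|) : qc ρ y = (y ^ 2)⁻¹ := by
  rw [qc, max_eq_left]
  nlinarith [sq_abs y, abs_nonneg y]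

lemma pc_eq (hρ : 0 < ρ) (h : ρ ≤ |y|) : pc ρ y = y⁻¹ := by
  have hy : y ≠ 0 := by
    intro h0; rw [h0] at h; simp at h; exact absurd h (not_le.2 hρ)
  rw [pc, qc_eq hρ h, sq]
  field_simp

lemma continuous_qc (hρ : 0 < ρ) : Continuous (qc ρ) := by
  apply Continuous.inv₀
  · exact (continuous_pow 2).max continuous_const
  · intro y; exact (max_sq_pos hρ).ne'

lemma continuous_pc (hρ : 0 < ρ) : Continuous (pc ρ) :=
  continuous_id.mul (continuous_qc hρ)

lemma qc_sub_qc (hρ : 0 < ρ) : qc ρ y - qc ρ z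
    = (max (z ^ 2) (ρ ^ 2) - max (y ^ 2) (ρ ^ 2)) * (qc ρ y * qc ρ z) := by
  have hy := (max_sq_pos (y := y) hρ).ne'
  have hz := (max_sq_pos (y := z) hρ).ne'
  rw [qc, qc]
  field_simp

lemma abs_max_sub (hρ : 0 < ρ) :
    |max (z ^ 2) (ρ ^ 2) - max (y ^ 2) (ρ ^ 2)| ≤ |z - y| * (|z| + |y|) := by
  have h1 : |max (z ^ 2) (ρ ^ 2) - max (y ^ 2) (ρ ^ 2)| ≤ |z ^ 2 - y ^ 2| :=
    abs_max_sub_max_le_abs _ _ _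
  have h2 : |z ^ 2 - y ^ 2| ≤ |z - y| * (|z| + |y|) := by
    have : z ^ 2 - y ^ 2 = (z - y) * (z + y) := by ring
    rw [this, abs_mul]
    exact mul_le_mul_of_nonneg_left (abs_add_le _ _) (abs_nonneg _)
  exact h1.trans h2

lemma qc_lip (hρ : 0 < ρ) : |qc ρ y - qc ρ z| ≤ 2 / ρ ^ 3 * |y - z| := by
  rw [qc_sub_qc hρ, abs_mul]
  have h3 : |qc ρ y * qc ρ z| = qc ρ y * qc ρ z := by
    rw [abs_of_pos (mul_pos (qc_pos hρ) (qc_pos hρ))]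
  rw [h3]
  have hb : (|z - y| * (|z| + |y|)) * (qc ρ y * qc ρ z)
      = |z - y| * (|z| * qc ρ z * qc ρ y + |y| * qc ρ y * qc ρ z) := by ring
  have h4 : |max (z ^ 2) (ρ ^ 2) - max (y ^ 2) (ρ ^ 2)| * (qc ρ y * qc ρ z)
      ≤ (|z - y| * (|z| + |y|)) * (qc ρ y * qc ρ z) := by
    apply mul_le_mul_of_nonneg_right (abs_max_sub hρ)
    exact (mul_pos (qc_pos hρ) (qc_pos hρ)).le
  have h5 : |z| * qc ρ z * qc ρ y + |y| * qc ρ y * qc ρ z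
      ≤ ρ⁻¹ * (ρ ^ 2)⁻¹ + ρ⁻¹ * (ρ ^ 2)⁻¹ := by
    apply add_le_add
    · exact mul_le_mul (abs_y_mul_qc_le hρ) (qc_le hρ) (qc_pos hρ).le (by positivity)
    · exact mul_le_mul (abs_y_mul_qc_le hρ) (qc_le hρ) (qc_pos hρ).le (by positivity)
  have h6 : ρ⁻¹ * (ρ ^ 2)⁻¹ + ρ⁻¹ * (ρ ^ 2)⁻¹ = 2 / ρ ^ 3 := by
    field_simp; ring
  calc |max (z ^ 2) (ρ ^ 2) - max (y ^ 2) (ρ ^ 2)| * (qc ρ y * qc ρ z)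
      ≤ |z - y| * (|z| * qc ρ z * qc ρ y + |y| * qc ρ y * qc ρ z) := by
        rw [← hb]; exact h4
    _ ≤ |z - y| * (2 / ρ ^ 3) := by
        apply mul_le_mul_of_nonneg_left (h6 ▸ h5) (abs_nonneg _)
    _ = 2 / ρ ^ 3 * |y - z| := by rw [abs_sub_comm]; ring

lemma z_mul_qc_lip (hρ : 0 < ρ) : |z| * |qc ρ y - qc ρ z| ≤ 2 / ρ ^ 2 * |y - z| := by
  rw [qc_sub_qc hρ, abs_mul]
  have h3 : |qc ρ y * qc ρ z| = qc ρ y * qc ρ z := by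
    rw [abs_of_pos (mul_pos (qc_pos hρ) (qc_pos hρ))]
  rw [h3]
  have h4 : |z| * (|max (z ^ 2) (ρ ^ 2) - max (y ^ 2) (ρ ^ 2)| * (qc ρ y * qc ρ z))
      ≤ |z| * ((|z - y| * (|z| + |y|)) * (qc ρ y * qc ρ z)) := by
    apply mul_le_mul_of_nonneg_left _ (abs_nonneg _)
    apply mul_le_mul_of_nonneg_right (abs_max_sub hρ)
    exact (mul_pos (qc_pos hρ) (qc_pos hρ)).le
  have hb : |z| * ((|z - y| * (|z| + |y|)) * (qc ρ y * qc ρ z))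
      = |z - y| * ((|z| * |z| * qc ρ z) * qc ρ y + (|y| * qc ρ y) * (|z| * qc ρ z)) := by ring
  have hz2 : |z| * |z| * qc ρ z = z ^ 2 * qc ρ z := by
    rw [abs_mul_abs_self]; ring
  have h5 : (|z| * |z| * qc ρ z) * qc ρ y + (|y| * qc ρ y) * (|z| * qc ρ z)
      ≤ 1 * (ρ ^ 2)⁻¹ + ρ⁻¹ * ρ⁻¹ := by
    apply add_le_add
    · rw [hz2]
      exact mul_le_mul (sq_mul_qc_le_one hρ) (qc_le hρ) (qc_pos hρ).le zero_le_one
    · exact mul_le_mul (abs_y_mul_qc_le hρ) (abs_y_mul_qc_le hρ)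
        (mul_nonneg (abs_nonneg _) (qc_pos hρ).le) (by positivity)
  have h6 : 1 * (ρ ^ 2)⁻¹ + ρ⁻¹ * ρ⁻¹ = 2 / ρ ^ 2 := by field_simp; ring
  calc |z| * (|max (z ^ 2) (ρ ^ 2) - max (y ^ 2) (ρ ^ 2)| * (qc ρ y * qc ρ z))
      ≤ |z - y| * ((|z| * |z| * qc ρ z) * qc ρ y + (|y| * qc ρ y) * (|z| * qc ρ z)) := by
        rw [← hb]; exact h4
    _ ≤ |z - y| * (2 / ρ ^ 2) := mul_le_mul_of_nonneg_left (h6 ▸ h5) (abs_nonneg _)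
    _ = 2 / ρ ^ 2 * |y - z| := by rw [abs_sub_comm]; ring

lemma pc_lip (hρ : 0 < ρ) : |pc ρ y - pc ρ z| ≤ 3 / ρ ^ 2 * |y - z| := by
  have key : pc ρ y - pc ρ z = (y - z) * qc ρ y + z * (qc ρ y - qc ρ z) := by
    rw [pc, pc]; ring
  rw [key]
  have h1 : |(y - z) * qc ρ y| ≤ (ρ ^ 2)⁻¹ * |y - z| := by
    rw [abs_mul]
    have := mul_le_mul_of_nonneg_left (abs_qc_le (y := y) hρ) (abs_nonneg (y - z))
    linarith [this]
  have h2 : |z * (qc ρ y - qc ρ z)| ≤ 2 / ρ ^ 2 * |y - z| := by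
    rw [abs_mul]; exact z_mul_qc_lip hρ
  have := abs_add_le ((y - z) * qc ρ y) (z * (qc ρ y - qc ρ z))
  have hfin : (ρ ^ 2)⁻¹ * |y - z| + 2 / ρ ^ 2 * |y - z| = 3 / ρ ^ 2 * |y - z| := by
    field_simp; ring
  linarith

lemma abs_psiK_le (hρ : 0 < ρ) : |psiK ρ t t' x| ≤ 2 / ρ ^ 3 := by
  have h1 : |pc ρ (t - x) * qc ρ (t' - x)| ≤ ρ⁻¹ * (ρ ^ 2)⁻¹ := by
    rw [abs_mul]
    exact mul_le_mul (abs_pc_le hρ) (abs_qc_le hρ) (abs_nonneg _) (by positivity)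
  have h2 : |qc ρ (t - x) * pc ρ (t' - x)| ≤ (ρ ^ 2)⁻¹ * ρ⁻¹ := by
    rw [abs_mul]
    exact mul_le_mul (abs_qc_le hρ) (abs_pc_le hρ) (abs_nonneg _) (by positivity)
  have h3 := abs_add_le (pc ρ (t - x) * qc ρ (t' - x)) (qc ρ (t - x) * pc ρ (t' - x))
  have h4 : ρ⁻¹ * (ρ ^ 2)⁻¹ + (ρ ^ 2)⁻¹ * ρ⁻¹ = 2 / ρ ^ 3 := by field_simp; ring
  rw [psiK]
  linarith

lemma psiK_lip (hρ : 0 < ρ) :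
    |psiK ρ t t' x - psiK ρ s s' x| ≤ 5 / ρ ^ 4 * (|t - s| + |t' - s'|) := by
  have e1 : psiK ρ t t' x - psiK ρ s s' x
      = (pc ρ (t - x) - pc ρ (s - x)) * qc ρ (t' - x)
        + pc ρ (s - x) * (qc ρ (t' - x) - qc ρ (s' - x))
        + (qc ρ (t - x) - qc ρ (s - x)) * pc ρ (t' - x)
        + qc ρ (s - x) * (pc ρ (t' - x) - pc ρ (s' - x)) := by
    rw [psiK, psiK]; ring
  have hts : |t - x - (s - x)| = |t - s| := by ring_nf
  have hts' : |t' - x - (s' - x)| = |t' - s'| := by ring_nf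
  have h1 : |(pc ρ (t - x) - pc ρ (s - x)) * qc ρ (t' - x)|
      ≤ (3 / ρ ^ 2 * |t - s|) * (ρ ^ 2)⁻¹ := by
    rw [abs_mul]
    exact mul_le_mul (hts ▸ pc_lip hρ) (abs_qc_le hρ) (abs_nonneg _) (by positivity)
  have h2 : |pc ρ (s - x) * (qc ρ (t' - x) - qc ρ (s' - x))|
      ≤ ρ⁻¹ * (2 / ρ ^ 3 * |t' - s'|) := by
    rw [abs_mul]
    exact mul_le_mul (abs_pc_le hρ) (hts' ▸ qc_lip hρ) (abs_nonneg _) (by positivity)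
  have h3 : |(qc ρ (t - x) - qc ρ (s - x)) * pc ρ (t' - x)|
      ≤ (2 / ρ ^ 3 * |t - s|) * ρ⁻¹ := by
    rw [abs_mul]
    exact mul_le_mul (hts ▸ qc_lip hρ) (abs_pc_le hρ) (abs_nonneg _) (by positivity)
  have h4 : |qc ρ (s - x) * (pc ρ (t' - x) - pc ρ (s' - x))|
      ≤ (ρ ^ 2)⁻¹ * (3 / ρ ^ 2 * |t' - s'|) := by
    rw [abs_mul]
    exact mul_le_mul (abs_qc_le hρ) (hts' ▸ pc_lip hρ) (abs_nonneg _) (by positivity)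
  rw [e1]
  set A := (pc ρ (t - x) - pc ρ (s - x)) * qc ρ (t' - x) with hA
  set B := pc ρ (s - x) * (qc ρ (t' - x) - qc ρ (s' - x)) with hB
  set C := (qc ρ (t - x) - qc ρ (s - x)) * pc ρ (t' - x) with hC
  set D := qc ρ (s - x) * (pc ρ (t' - x) - pc ρ (s' - x)) with hD
  have key1 := abs_add_le (A + B + C) D
  have key2 := abs_add_three A B C
  have harith : (3 / ρ ^ 2 * |t - s|) * (ρ ^ 2)⁻¹ + ρ⁻¹ * (2 / ρ ^ 3 * |t' - s'|)
      + (2 / ρ ^ 3 * |t - s|) * ρ⁻¹ + (ρ ^ 2)⁻¹ * (3 / ρ ^ 2 * |t' - s'|)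
      = 5 / ρ ^ 4 * (|t - s| + |t' - s'|) := by
    field_simp; ring
  linarith

lemma psiK_identity (hρ : 0 < ρ) (h1 : ρ ≤ |t - x|) (h2 : ρ ≤ |t' - x|) :
    qc ρ (t - x) - qc ρ (t' - x) = (t' - t) * psiK ρ t t' x := by
  have ht : t - x ≠ 0 := fun h0 => by rw [h0] at h1; simp at h1; exact absurd h1 (not_le.2 hρ)
  have ht' : t' - x ≠ 0 := fun h0 => by rw [h0] at h2; simp at h2; exact absurd h2 (not_le.2 hρ)
  rw [qc_eq hρ h1, qc_eq hρ h2, psiK, pc_eq hρ h1, pc_eq hρ h2, qc_eq hρ h1, qc_eq hρ h2]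
  field_simp
  ring

/-- Equi-Lipschitz + pointwise convergence ⇒ uniform convergence on a compact set. -/
lemma unif_of_lip {X : Type*} [PseudoMetricSpace X] {K : Set X} (hK : IsCompact K)
    {F : ℕ → X → ℝ} {f : X → ℝ} {L : ℝ} (hL : 0 ≤ L)
    (hlipF : ∀ N (x y : X), |F N x - F N y| ≤ L * dist x y)
    (hlipf : ∀ x y : X, |f x - f y| ≤ L * dist x y)
    (htend : ∀ x ∈ K, Tendsto (fun N => F N x) atTop (𝓝 (f x)))
    {δ : ℝ} (hδ : 0 < δ) :
    ∀ᶠ N in atTop, ∀ x ∈ K, |F N x - f x| < δ := by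
  set rr : ℝ := δ / (4 * (L + 1)) with hrr
  have hrpos : 0 < rr := by positivity
  have hcover : K ⊆ ⋃ x : K, Metric.ball (x : X) rr := by
    intro x hx
    exact Set.mem_iUnion.2 ⟨⟨x, hx⟩, Metric.mem_ball_self hrpos⟩
  obtain ⟨t, ht⟩ := hK.elim_finite_subcover (fun x : K => Metric.ball (x : X) rr)
    (fun x => Metric.isOpen_ball) hcover
  have hev : ∀ᶠ N in atTop, ∀ i ∈ t, |F N (i : X) - f (i : X)| < δ / 4 := by
    rw [Filter.eventually_all_finset]
    intro i _
    have h1 := htend (i : X) i.2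
    have h2 : Metric.ball (f (i : X)) (δ / 4) ∈ 𝓝 (f (i : X)) :=
      Metric.ball_mem_nhds _ (by positivity)
    filter_upwards [h1.eventually_mem h2] with N hN
    rw [Metric.mem_ball, Real.dist_eq] at hN
    exact hN
  filter_upwards [hev] with N hN x hx
  obtain ⟨i, hi⟩ := Set.mem_iUnion₂.1 (ht hx)
  obtain ⟨hit, hxi⟩ := hi
  rw [Metric.mem_ball] at hxi
  have hd : dist x (i : X) ≤ rr := hxi.le
  have b1 : |F N x - F N (i : X)| ≤ L * rr :=
    (hlipF N x (i : X)).trans (mul_le_mul_of_nonneg_left hd hL)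
  have b2 : |f (i : X) - f x| ≤ L * rr := by
    have := hlipf (i : X) x
    rw [dist_comm] at this
    exact this.trans (mul_le_mul_of_nonneg_left hd hL)
  have b3 := hN i hit
  have hLr : L * rr ≤ δ / 4 := by
    rw [hrr]
    have hL1 : (0:ℝ) < L + 1 := by linarith
    have heq : L * (δ / (4 * (L + 1))) = (L / (L + 1)) * (δ / 4) := by
      field_simp
    have h1 : L / (L + 1) ≤ 1 := by
      rw [div_le_one hL1]; linarith
    rw [heq]
    nlinarith [hδ.le]
  have tri : |F N x - f x| ≤ |F N x - F N (i : X)| + |F N (i : X) - f (i : X)|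
      + |f (i : X) - f x| := by
    have := abs_add_le (F N x - F N (i : X)) (F N (i : X) - f (i : X))
    have h2 := abs_add_le (F N x - F N (i : X) + (F N (i : X) - f (i : X))) (f (i : X) - f x)
    have heq : F N x - F N (i : X) + (F N (i : X) - f (i : X)) + (f (i : X) - f x)
        = F N x - f x := by ring
    rw [heq] at h2
    linarith
  linarith

/-- Any function is integrable w.r.t. a Dirac measure. -/
lemma integrable_dirac'' (f : ℝ → ℝ) (a : ℝ) : Integrable f (Measure.dirac a) := by
  have h : f =ᵐ[Measure.dirac a] fun _ => f a := by
    rw [MeasureTheory.ae_dirac_eq a]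
    exact Filter.eventually_pure.2 rfl
  exact (integrable_const (f a)).congr h.symm

lemma measSupp_compl_null (μ : Measure ℝ) : μ (MeasSupp μ)ᶜ = 0 := by
  apply measure_null_of_locally_null
  intro x hx
  simp only [MeasSupp, mem_compl_iff, mem_setOf_eq, not_forall] at hx
  obtain ⟨U, hU, hU0⟩ := hx
  push_neg at hU0
  exact ⟨U, nhdsWithin_le_nhds hU, hU0⟩

lemma measSupp_closed (μ : Measure ℝ) : IsClosed (MeasSupp μ) := by
  rw [← isOpen_compl_iff, isOpen_iff_mem_nhds]
  intro x hx
  simp only [MeasSupp, mem_compl_iff, mem_setOf_eq, not_forall] at hx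
  obtain ⟨U, hU, hU0⟩ := hx
  push_neg at hU0
  have : interior U ∈ 𝓝 x := interior_mem_nhds.2 hU
  filter_upwards [this] with y hy
  simp only [MeasSupp, mem_compl_iff, mem_setOf_eq, not_forall]
  refine ⟨interior U, isOpen_interior.mem_nhds hy, ?_⟩
  push_neg
  exact measure_mono_null interior_subset hU0

lemma integral_dirac_sum (f : ℝ → ℝ) (s : Finset ℕ) (g : ℕ → ℝ) :
    ∫ x, f x ∂(∑ i ∈ s, Measure.dirac (g i)) = ∑ i ∈ s, f (g i) := by
  rw [integral_finset_sum_measure (fun i _ => integrable_dirac'' f (g i))]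
  simp [MeasureTheory.integral_dirac]

lemma integral_hatNu (r : ℕ) (β : ℕ → ℕ → ℝ) (N : ℕ) (f : ℝ → ℝ) :
    ∫ x, f x ∂(hatNu r β N) = ((N - r : ℕ) : ℝ)⁻¹ * ∑ i ∈ Finset.range (N - r), f (β N i) := by
  rw [hatNu, integral_smul_measure, integral_dirac_sum]
  have hc : (((N - r : ℕ) : ℝ≥0∞))⁻¹.toReal = ((N - r : ℕ) : ℝ)⁻¹ := by
    rw [ENNReal.toReal_inv, ENNReal.toReal_natCast]
  rw [hc, smul_eq_mul]

lemma integral_muA_eq {J r N : ℕ} (θ : Fin J → ℝ) (k : Fin J → ℕ) (β : ℕ → ℕ → ℝ)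
    (μ : Measure ℝ)
    (hdec : μ = (N : ℝ≥0∞)⁻¹ •
      ((∑ j, (k j : ℝ≥0∞) • Measure.dirac (θ j)) +
        ∑ i ∈ Finset.range (N - r), Measure.dirac (β N i)))
    (f : ℝ → ℝ) :
    ∫ x, f x ∂μ = (N : ℝ)⁻¹ *
      ((∑ j, (k j : ℝ) * f (θ j)) + ∑ i ∈ Finset.range (N - r), f (β N i)) := by
  have hint1 : ∀ j : Fin J, Integrable f ((k j : ℝ≥0∞) • Measure.dirac (θ j)) :=
    fun j => (integrable_dirac'' f (θ j)).smul_measure (by simp)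
  have h1 : Integrable f (∑ j, (k j : ℝ≥0∞) • Measure.dirac (θ j)) :=
    integrable_finset_sum_measure.2 fun j _ => hint1 j
  have h2 : Integrable f (∑ i ∈ Finset.range (N - r), Measure.dirac (β N i)) :=
    integrable_finset_sum_measure.2 fun i _ => integrable_dirac'' f (β N i)
  rw [hdec, integral_smul_measure, integral_add_measure h1 h2, integral_dirac_sum,
    integral_finset_sum_measure (fun j _ => hint1 j)]
  have hj : ∀ j : Fin J, ∫ x, f x ∂((k j : ℝ≥0∞) • Measure.dirac (θ j))
      = (k j : ℝ) * f (θ j) := by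
    intro j
    rw [integral_smul_measure, MeasureTheory.integral_dirac]
    simp
  simp only [hj]
  have hc : ((N : ℝ≥0∞))⁻¹.toReal = ((N : ℕ) : ℝ)⁻¹ := by
    rw [ENNReal.toReal_inv, ENNReal.toReal_natCast]
  rw [hc, smul_eq_mul]

lemma hW_int_eq {ρ a b : ℝ} (hρ : 0 < ρ) (h1 : ρ ≤ |a|) (h2 : ρ ≤ |b|) :
    (a + b) / (a ^ 2 * b ^ 2) = pc ρ a * qc ρ b + qc ρ a * pc ρ b := by
  have ha : a ≠ 0 := fun h0 => by rw [h0] at h1; simp at h1; exact absurd h1 (not_le.2 hρ)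
  have hb : b ≠ 0 := fun h0 => by rw [h0] at h2; simp at h2; exact absurd h2 (not_le.2 hρ)
  rw [pc_eq hρ h1, qc_eq hρ h2, qc_eq hρ h1, pc_eq hρ h2]
  field_simp

set_option maxHeartbeats 1000000 in
/-- existence, uniqueness and fixed-point identity for `t₀(N)` near a point
`t₀ ∉ supp(ν) ∪ Θ` with `∫ dν(x)/(t₀−x)² = 1` and `∫ dν(x)/(t₀−x)³ ≠ 0`. -/
theorem stmt10
    (ν : Measure ℝ) [IsProbabilityMeasure ν] (hcomp : IsCompact (MeasSupp ν))
    (J r : ℕ) (θ : Fin J → ℝ) (k : Fin J → ℕ)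
    (hθanti : StrictAnti θ) (hθsupp : ∀ j, θ j ∉ MeasSupp ν)
    (hkpos : ∀ j, 0 < k j) (hkr : ∑ j, k j = r)
    (β : ℕ → ℕ → ℝ) (μA : ℕ → Measure ℝ)
    (hprob : ∀ N, IsProbabilityMeasure (μA N))
    (hdecomp : ∀ N, r ≤ N → μA N = (N : ℝ≥0∞)⁻¹ •
      ((∑ j, (k j : ℝ≥0∞) • Measure.dirac (θ j)) +
        ∑ i ∈ Finset.range (N - r), Measure.dirac (β N i)))
    (hweak : ∀ f : BoundedContinuousFunction ℝ ℝ,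
      Tendsto (fun N => ∫ x, f x ∂(μA N)) atTop (𝓝 (∫ x, f x ∂ν)))
    (hβ : ∀ ε > 0, ∀ᶠ N in atTop, ∀ i ∈ Finset.range (N - r),
      Metric.infDist (β N i) (MeasSupp ν) < ε)
    (t₀ : ℝ) (ht₀ : t₀ ∉ MeasSupp ν ∪ Set.range θ)
    (h2 : ∫ x, ((t₀ - x) ^ 2)⁻¹ ∂ν = 1) (h3 : ∫ x, ((t₀ - x) ^ 3)⁻¹ ∂ν ≠ 0) :
    ∃ ε₀ > (0 : ℝ), ∀ ε, 0 < ε → ε ≤ ε₀ →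
      (∃ K₁ K₂ : ℝ, 0 < K₁ ∧ ∀ t ∈ Set.Ioo (t₀ - ε) (t₀ + ε),
        K₁ < |hWeight ν t₀ t| ∧ |hWeight ν t₀ t| < K₂) ∧
      ∀ᶠ N in atTop, ∃ tN ∈ Set.Ioo (t₀ - ε) (t₀ + ε),
        (∫ x, ((tN - x) ^ 2)⁻¹ ∂(μA N)) = 1 ∧
        (∀ t' ∈ Set.Ioo (t₀ - ε) (t₀ + ε), (∫ x, ((t' - x) ^ 2)⁻¹ ∂(μA N)) = 1 → t' = tN) ∧
        tN = t₀ + fN ν r θ k β t₀ N tN := by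
  classical
  -- Support facts
  have hSclosed : IsClosed (MeasSupp ν) := measSupp_closed ν
  have hSnull : ν (MeasSupp ν)ᶜ = 0 := measSupp_compl_null ν
  have hae : ∀ᵐ x ∂ν, x ∈ MeasSupp ν := by
    rw [MeasureTheory.ae_iff]
    exact hSnull
  have hSne : (MeasSupp ν).Nonempty := by
    by_contra h
    rw [Set.not_nonempty_iff_eq_empty] at h
    have h0 : ν Set.univ = 0 := by
      have : (MeasSupp ν)ᶜ = Set.univ := by rw [h, Set.compl_empty]
      rw [← this]; exact hSnull
    rw [measure_univ] at h0
    exact one_ne_zero h0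
  -- T and the gap d
  set T : Set ℝ := MeasSupp ν ∪ Set.range θ with hTdef
  have hTclosed : IsClosed T := hSclosed.union (Set.finite_range θ).isClosed
  obtain ⟨d, hd, hball⟩ := Metric.isOpen_iff.1 hTclosed.isOpen_compl t₀ ht₀
  have hdist : ∀ x ∈ T, d ≤ |t₀ - x| := by
    intro x hx
    by_contra hcon; push_neg at hcon
    have hx' : x ∈ Metric.ball t₀ d := by
      rw [Metric.mem_ball, Real.dist_eq, abs_sub_comm]; exact hcon
    exact hball hx' hx
  set ρ : ℝ := d / 2 with hρdef
  set ε₁ : ℝ := d / 4 with hε₁def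
  have hρ : 0 < ρ := by rw [hρdef]; linarith
  have hε₁ : 0 < ε₁ := by rw [hε₁def]; linarith
  -- distance lemmas
  have hfar : ∀ t x : ℝ, |t - t₀| ≤ ε₁ → x ∈ T → ρ ≤ |t - x| := by
    intro t x ht hx
    have h1 := hdist x hx
    have h2 := abs_sub_le t₀ t x
    rw [abs_sub_comm t₀ t] at h2
    rw [hρdef]; rw [hε₁def] at ht; linarith
  have hfarβ : ∀ b : ℝ, Metric.infDist b (MeasSupp ν) < ε₁ →
      ∀ t : ℝ, |t - t₀| ≤ ε₁ → ρ ≤ |t - b| := by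
    intro b hb t ht
    obtain ⟨s, hs, hbs⟩ := (Metric.infDist_lt_iff hSne).1 hb
    have h1 : d ≤ |t₀ - s| := hdist s (Or.inl hs)
    have h2 := abs_sub_le t₀ t s
    have h3 := abs_sub_le t b s
    rw [abs_sub_comm t₀ t] at h2
    rw [Real.dist_eq] at hbs
    rw [hρdef]; rw [hε₁def] at ht hbs; linarith
  have haeS : ∀ t : ℝ, |t - t₀| ≤ ε₁ → ∀ᵐ x ∂ν, ρ ≤ |t - x| :=
    fun t ht => hae.mono fun x hx => hfar t x ht (Or.inl hx)
  -- bounded continuous kernels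
  have contq : ∀ a : ℝ, Continuous (fun x => qc ρ (a - x)) :=
    fun a => (continuous_qc hρ).comp (continuous_const.sub continuous_id)
  have contp : ∀ a : ℝ, Continuous (fun x => pc ρ (a - x)) :=
    fun a => (continuous_pc hρ).comp (continuous_const.sub continuous_id)
  have contψ : ∀ a b : ℝ, Continuous (fun x => psiK ρ a b x) := by
    intro a b
    exact ((contp a).mul (contq b)).add ((contq a).mul (contp b))
  set φb : ℝ → BoundedContinuousFunction ℝ ℝ := fun t =>
    BoundedContinuousFunction.ofNormedAddCommGroup (fun x => qc ρ (t - x)) (contq t)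
      ((ρ ^ 2)⁻¹) (fun x => by rw [Real.norm_eq_abs]; exact abs_qc_le hρ) with hφbdef
  set Ψb : ℝ × ℝ → BoundedContinuousFunction ℝ ℝ := fun z =>
    BoundedContinuousFunction.ofNormedAddCommGroup (fun x => psiK ρ z.1 z.2 x)
      (contψ z.1 z.2) (2 / ρ ^ 3)
      (fun x => by rw [Real.norm_eq_abs]; exact abs_psiK_le hρ) with hΨbdef
  have hφcoe : ∀ t x, φb t x = qc ρ (t - x) := fun t x => rfl
  have hΨcoe : ∀ z x, Ψb z x = psiK ρ z.1 z.2 x := fun z x => rfl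
  -- the limit functions
  set Gν : ℝ → ℝ := fun t => ∫ x, qc ρ (t - x) ∂ν with hGνdef
  set Fν : ℝ × ℝ → ℝ := fun z => ∫ x, psiK ρ z.1 z.2 x ∂ν with hFνdef
  set FA : ℕ → ℝ × ℝ → ℝ := fun N z => ∫ x, psiK ρ z.1 z.2 x ∂(μA N) with hFAdef
  set LF : ℝ := 10 / ρ ^ 4 with hLFdef
  have hLFpos : 0 < LF := by rw [hLFdef]; positivity
  -- Lipschitz estimate for ψ-integrals against any probability measure
  have hFlip : ∀ (μ : Measure ℝ), IsProbabilityMeasure μ → ∀ z w : ℝ × ℝ,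
      |(∫ x, psiK ρ z.1 z.2 x ∂μ) - ∫ x, psiK ρ w.1 w.2 x ∂μ| ≤ LF * dist z w := by
    intro μ hμ z w
    haveI := hμ
    have hint1 : Integrable (fun x => psiK ρ z.1 z.2 x) μ := (Ψb z).integrable μ
    have hint2 : Integrable (fun x => psiK ρ w.1 w.2 x) μ := (Ψb w).integrable μ
    rw [← integral_sub hint1 hint2]
    have hbd : ∀ x : ℝ, ‖psiK ρ z.1 z.2 x - psiK ρ w.1 w.2 x‖
        ≤ 5 / ρ ^ 4 * (|z.1 - w.1| + |z.2 - w.2|) := by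
      intro x
      rw [Real.norm_eq_abs]
      exact psiK_lip hρ
    have h1 : ‖∫ x, (psiK ρ z.1 z.2 x - psiK ρ w.1 w.2 x) ∂μ‖
        ≤ 5 / ρ ^ 4 * (|z.1 - w.1| + |z.2 - w.2|) * (μ Set.univ).toReal :=
      norm_integral_le_of_norm_le_const (Filter.Eventually.of_forall hbd)
    rw [measure_univ] at h1
    simp only [ENNReal.toReal_one, mul_one] at h1
    rw [Real.norm_eq_abs] at h1
    have h2 : |z.1 - w.1| ≤ dist z w := by
      rw [Prod.dist_eq, Real.dist_eq, Real.dist_eq]; exact le_max_left _ _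
    have h3 : |z.2 - w.2| ≤ dist z w := by
      rw [Prod.dist_eq, Real.dist_eq, Real.dist_eq]; exact le_max_right _ _
    have h4 : 5 / ρ ^ 4 * (|z.1 - w.1| + |z.2 - w.2|) ≤ LF * dist z w := by
      rw [hLFdef]
      have h5 : (0:ℝ) < 5 / ρ ^ 4 := by positivity
      have b1 := mul_le_mul_of_nonneg_left h2 h5.le
      have b2 := mul_le_mul_of_nonneg_left h3 h5.le
      have heq : (10:ℝ) / ρ ^ 4 * dist z w = 5 / ρ ^ 4 * dist z w + 5 / ρ ^ 4 * dist z w := by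
        ring
      have hdistr : 5 / ρ ^ 4 * (|z.1 - w.1| + |z.2 - w.2|)
          = 5 / ρ ^ 4 * |z.1 - w.1| + 5 / ρ ^ 4 * |z.2 - w.2| := by ring
      linarith
    linarith
  have hFνlip : ∀ z w : ℝ × ℝ, |Fν z - Fν w| ≤ LF * dist z w :=
    fun z w => hFlip ν inferInstance z w
  have hFAlip : ∀ N, ∀ z w : ℝ × ℝ, |FA N z - FA N w| ≤ LF * dist z w :=
    fun N z w => hFlip (μA N) (hprob N) z w
  -- I₀
  set I₀ : ℝ := Fν (t₀, t₀) with hI₀def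
  have ht₀self : |t₀ - t₀| ≤ ε₁ := by simp [hε₁.le]
  have hI₀eq : I₀ = 2 * ∫ x, ((t₀ - x) ^ 3)⁻¹ ∂ν := by
    have hFn : I₀ = ∫ x, psiK ρ t₀ t₀ x ∂ν := rfl
    rw [hFn]
    have hcong : (fun x => psiK ρ t₀ t₀ x) =ᵐ[ν] fun x => 2 * ((t₀ - x) ^ 3)⁻¹ := by
      filter_upwards [haeS t₀ ht₀self] with x hx
      have hne : t₀ - x ≠ 0 := fun h0 => by rw [h0] at hx; simp at hx; linarith
      rw [psiK, pc_eq hρ hx, qc_eq hρ hx]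
      field_simp
      ring
    rw [integral_congr_ae hcong, integral_const_mul]
  have hI₀ne : I₀ ≠ 0 := by
    rw [hI₀eq]
    exact mul_ne_zero two_ne_zero h3
  have hI₀pos : 0 < |I₀| := abs_pos.2 hI₀ne
  -- choice of ε₀
  set ε₀ : ℝ := min ε₁ (|I₀| / (8 * (LF + 1))) with hε₀def
  have hε₀pos : 0 < ε₀ := lt_min hε₁ (by positivity)
  have hε₀le₁ : ε₀ ≤ ε₁ := min_le_left _ _
  set Qs : Set (ℝ × ℝ) := Set.Icc (t₀ - ε₀) (t₀ + ε₀) ×ˢ Set.Icc (t₀ - ε₀) (t₀ + ε₀)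
    with hQdef
  have hQcompact : IsCompact Qs := isCompact_Icc.prod isCompact_Icc
  have hQmem : ∀ z : ℝ × ℝ, |z.1 - t₀| ≤ ε₀ → |z.2 - t₀| ≤ ε₀ → z ∈ Qs := by
    intro z hz1 hz2
    rw [abs_le] at hz1 hz2
    exact ⟨⟨by linarith [hz1.1], by linarith [hz1.2]⟩, ⟨by linarith [hz2.1], by linarith [hz2.2]⟩⟩
  have hQnear : ∀ z ∈ Qs, |Fν z - I₀| ≤ |I₀| / 4 := by
    intro z hz
    obtain ⟨hz1, hz2⟩ := hz
    rw [Set.mem_Icc] at hz1 hz2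
    have hdz : dist z (t₀, t₀) ≤ ε₀ := by
      rw [Prod.dist_eq]
      apply max_le
      · rw [Real.dist_eq, abs_le]; constructor <;> linarith [hz1.1, hz1.2]
      · rw [Real.dist_eq, abs_le]; constructor <;> linarith [hz2.1, hz2.2]
    have h1 := hFνlip z (t₀, t₀)
    have h2 : LF * dist z (t₀, t₀) ≤ LF * ε₀ :=
      mul_le_mul_of_nonneg_left hdz hLFpos.le
    have h3 : LF * ε₀ ≤ LF * (|I₀| / (8 * (LF + 1))) :=
      mul_le_mul_of_nonneg_left (min_le_right _ _) hLFpos.le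
    have h4 : LF * (|I₀| / (8 * (LF + 1))) ≤ |I₀| / 4 := by
      rw [← mul_div_assoc, div_le_div_iff₀ (by positivity) (by norm_num : (0:ℝ) < 4)]
      have hp : 0 ≤ LF * |I₀| := mul_nonneg hLFpos.le (abs_nonneg I₀)
      have hexp : |I₀| * (8 * (LF + 1)) = 8 * (LF * |I₀|) + 8 * |I₀| := by ring
      have hL4 : LF * |I₀| * 4 = 4 * (LF * |I₀|) := by ring
      linarith [hI₀pos.le]
    calc |Fν z - I₀| ≤ LF * dist z (t₀, t₀) := h1
      _ ≤ |I₀| / 4 := by linarith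
  have hQlow : ∀ z ∈ Qs, 3 * |I₀| / 4 ≤ |Fν z| := by
    intro z hz
    have h1 := hQnear z hz
    have h2 := abs_sub_abs_le_abs_sub (I₀) (Fν z)
    rw [abs_sub_comm I₀ (Fν z)] at h2
    linarith
  have hQhigh : ∀ z ∈ Qs, |Fν z| ≤ 5 * |I₀| / 4 := by
    intro z hz
    have h1 := hQnear z hz
    have h2 := abs_sub_abs_le_abs_sub (Fν z) I₀
    linarith
  -- hWeight in terms of Fν
  have hWeq : ∀ t : ℝ, |t - t₀| ≤ ε₁ → hWeight ν t₀ t = (Fν (t, t₀))⁻¹ := by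
    intro t ht
    rw [hWeight, hFνdef]
    congr 1
    apply integral_congr_ae
    filter_upwards [haeS t ht, haeS t₀ ht₀self] with x hx1 hx2
    exact hW_int_eq hρ hx1 hx2
  -- value lemmas (definitional)
  have hFνval : ∀ a b : ℝ, Fν (a, b) = ∫ x, psiK ρ a b x ∂ν := fun a b => rfl
  have hGνval : ∀ t : ℝ, Gν t = ∫ x, qc ρ (t - x) ∂ν := fun t => rfl
  have hFAval : ∀ (M : ℕ) (a b : ℝ), FA M (a, b) = ∫ x, psiK ρ a b x ∂(μA M) :=
    fun _ _ _ => rfl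
  -- Gν t₀ = 1
  have hGt₀ : Gν t₀ = 1 := by
    rw [hGνval, ← h2]
    apply integral_congr_ae
    filter_upwards [haeS t₀ ht₀self] with x hx
    rw [qc_eq hρ hx]
  -- difference identity for Gν
  have hGdiff : ∀ u : ℝ, |u - t₀| ≤ ε₁ → Gν u - Gν t₀ = (t₀ - u) * Fν (u, t₀) := by
    intro u hu
    have hint1 : Integrable (fun x => qc ρ (u - x)) ν := (φb u).integrable ν
    have hint2 : Integrable (fun x => qc ρ (t₀ - x)) ν := (φb t₀).integrable ν
    have hstep : Gν u - Gν t₀ = ∫ x, (qc ρ (u - x) - qc ρ (t₀ - x)) ∂ν :=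
      (integral_sub hint1 hint2).symm
    rw [hstep]
    have hcong : (fun x => qc ρ (u - x) - qc ρ (t₀ - x)) =ᵐ[ν]
        fun x => (t₀ - u) * psiK ρ u t₀ x := by
      filter_upwards [haeS u hu, haeS t₀ ht₀self] with x hx1 hx2
      exact psiK_identity hρ hx1 hx2
    rw [integral_congr_ae hcong, integral_const_mul, hFνval]
  -- eventual events (ε-independent)
  have EV1 : ∀ᶠ N in atTop, r + 1 ≤ N := eventually_ge_atTop (r + 1)
  have EV2 := hβ ε₁ hε₁
  have EV3 : ∀ᶠ N in atTop, ∀ z ∈ Qs, |FA N z - Fν z| < |I₀| / 4 := by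
    apply unif_of_lip hQcompact hLFpos.le hFAlip hFνlip _ (by positivity)
    intro z _
    have h := hweak (Ψb z)
    simp only [hΨcoe] at h
    exact h
  refine ⟨ε₀, hε₀pos, ?_⟩
  intro ε hε hεle
  have hεε₁ : ε ≤ ε₁ := hεle.trans hε₀le₁
  constructor
  · -- bounds on hWeight
    refine ⟨(2 * |I₀|)⁻¹, 2 / |I₀|, by positivity, ?_⟩
    intro t ht
    obtain ⟨ht1, ht2⟩ := ht
    have htt₀ : |t - t₀| ≤ ε₀ := by
      rw [abs_le]; constructor <;> linarith
    have hz : (t, t₀) ∈ Qs := hQmem (t, t₀) htt₀ (by simpa using hε₀pos.le)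
    have hW := hWeq t (htt₀.trans hε₀le₁)
    rw [hW, abs_inv]
    have hlow := hQlow _ hz
    have hhigh := hQhigh _ hz
    have hFpos : 0 < |Fν (t, t₀)| := by linarith
    constructor
    · have hlt : |Fν (t, t₀)| < 2 * |I₀| := by linarith
      exact inv_strictAnti₀ hFpos hlt
    · have hgt : |I₀| / 2 < |Fν (t, t₀)| := by linarith
      have h1 : |Fν (t, t₀)|⁻¹ < (|I₀| / 2)⁻¹ := inv_strictAnti₀ (by linarith) hgt
      rwa [inv_div] at h1
  · -- eventual existence, uniqueness, fixed point
    set ua : ℝ := t₀ - ε / 2 with huadef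
    set ub : ℝ := t₀ + ε / 2 with hubdef
    have huord : ua ≤ ub := by rw [huadef, hubdef]; linarith
    have huat₀ : |ua - t₀| ≤ ε₀ := by
      rw [huadef, abs_le]; constructor <;> [linarith; linarith]
    have hubt₀ : |ub - t₀| ≤ ε₀ := by
      rw [hubdef, abs_le]; constructor <;> [linarith; linarith]
    set δε : ℝ := ε / 2 * (|I₀| / 4) with hδεdef
    have hδεpos : 0 < δε := by rw [hδεdef]; positivity
    have EV4 : ∀ᶠ N in atTop,
        |(∫ x, qc ρ (ub - x) ∂(μA N)) - ∫ x, qc ρ (ub - x) ∂ν| < δε := by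
      have h := hweak (φb ub)
      simp only [hφcoe] at h
      have hb : Metric.ball (∫ x, qc ρ (ub - x) ∂ν) δε ∈ 𝓝 (∫ x, qc ρ (ub - x) ∂ν) :=
        Metric.ball_mem_nhds _ hδεpos
      filter_upwards [h.eventually_mem hb] with N hN
      rw [Metric.mem_ball, Real.dist_eq] at hN
      exact hN
    have EV5 : ∀ᶠ N in atTop,
        |(∫ x, qc ρ (ua - x) ∂(μA N)) - ∫ x, qc ρ (ua - x) ∂ν| < δε := by
      have h := hweak (φb ua)
      simp only [hφcoe] at h
      have hb : Metric.ball (∫ x, qc ρ (ua - x) ∂ν) δε ∈ 𝓝 (∫ x, qc ρ (ua - x) ∂ν) :=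
        Metric.ball_mem_nhds _ hδεpos
      filter_upwards [h.eventually_mem hb] with N hN
      rw [Metric.mem_ball, Real.dist_eq] at hN
      exact hN
    filter_upwards [EV1, EV2, EV3, EV4, EV5] with N hN1 hN2 hN3 hN4 hN5
    -- basic numerics
    have hNr : r ≤ N := le_trans (Nat.le_succ r) hN1
    have hNrlt : r < N := Nat.lt_of_lt_of_le (Nat.lt_succ_self r) hN1
    have hNpos : (0:ℝ) < (N:ℝ) := by
      have : 0 < N := lt_of_lt_of_le (Nat.succ_pos r) hN1
      exact_mod_cast this
    have hNrpos : (0:ℝ) < ((N - r : ℕ):ℝ) := by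
      have : 0 < N - r := Nat.sub_pos_of_lt hNrlt
      exact_mod_cast this
    have hμAeq := hdecomp N hNr
    -- the discrete capped Stieltjes-type function
    set SA : ℝ → ℝ := fun t => (N:ℝ)⁻¹ *
      ((∑ j, (k j : ℝ) * qc ρ (t - θ j)) +
        ∑ i ∈ Finset.range (N - r), qc ρ (t - β N i)) with hSAdef
    have hSAval : ∀ t : ℝ, SA t = (N:ℝ)⁻¹ *
        ((∑ j, (k j : ℝ) * qc ρ (t - θ j)) +
          ∑ i ∈ Finset.range (N - r), qc ρ (t - β N i)) := fun t => rfl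
    have hSAeq : ∀ t : ℝ, (∫ x, qc ρ (t - x) ∂(μA N)) = SA t := by
      intro t
      rw [hSAval]
      exact integral_muA_eq θ k β (μA N) hμAeq _
    have hSAcont : Continuous SA := by
      apply continuous_const.mul
      apply Continuous.add
      · apply continuous_finset_sum
        intro j _
        exact continuous_const.mul ((continuous_qc hρ).comp (continuous_id.sub continuous_const))
      · apply continuous_finset_sum
        intro i _
        exact (continuous_qc hρ).comp (continuous_id.sub continuous_const)
    have hθT : ∀ j : Fin J, θ j ∈ T := fun j => Or.inr ⟨j, rfl⟩
    have hraw : ∀ t : ℝ, |t - t₀| ≤ ε₁ → (∫ x, ((t - x) ^ 2)⁻¹ ∂(μA N)) = SA t := by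
      intro t ht
      rw [integral_muA_eq θ k β (μA N) hμAeq (fun x => ((t - x) ^ 2)⁻¹), hSAval]
      congr 1
      congr 1
      · apply Finset.sum_congr rfl
        intro j _
        rw [qc_eq hρ (hfar t (θ j) ht (hθT j))]
      · apply Finset.sum_congr rfl
        intro i hi
        rw [qc_eq hρ (hfarβ (β N i) (hN2 i hi) t ht)]
    -- existence via IVT
    have hSAub : |SA ub - Gν ub| < δε := by
      rw [← hSAeq]; exact hN4
    have hSAua : |SA ua - Gν ua| < δε := by
      rw [← hSAeq]; exact hN5
    have hGub : Gν ub = 1 - ε / 2 * Fν (ub, t₀) := by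
      have h := hGdiff ub (hubt₀.trans hε₀le₁)
      rw [hGt₀] at h
      have : t₀ - ub = -(ε / 2) := by rw [hubdef]; ring
      rw [this] at h
      linarith
    have hGua : Gν ua = 1 + ε / 2 * Fν (ua, t₀) := by
      have h := hGdiff ua (huat₀.trans hε₀le₁)
      rw [hGt₀] at h
      have : t₀ - ua = ε / 2 := by rw [huadef]; ring
      rw [this] at h
      linarith
    have hzub : (ub, t₀) ∈ Qs := hQmem _ hubt₀ (by simpa using hε₀pos.le)
    have hzua : (ua, t₀) ∈ Qs := hQmem _ huat₀ (by simpa using hε₀pos.le)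
    have hxb := hQnear _ hzub
    have hxa := hQnear _ hzua
    obtain ⟨tN, htNmem, htNval⟩ : ∃ tN ∈ Set.Ioo ua ub, SA tN = 1 := by
      rcases hI₀ne.lt_or_gt with hneg | hpos
      · -- I₀ < 0 : Gν increasing, SA ua < 1 < SA ub
        have habs : |I₀| = -I₀ := abs_of_neg hneg
        rw [habs] at hxb hxa
        have hFb : Fν (ub, t₀) ≤ 3 * I₀ / 4 := by
          have := (abs_le.1 hxb).2; linarith
        have hFa : Fν (ua, t₀) ≤ 3 * I₀ / 4 := by
          have := (abs_le.1 hxa).2; linarith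
        have hmulb : ε / 2 * Fν (ub, t₀) ≤ ε / 2 * (3 * I₀ / 4) :=
          mul_le_mul_of_nonneg_left hFb (by linarith)
        have hmula : ε / 2 * Fν (ua, t₀) ≤ ε / 2 * (3 * I₀ / 4) :=
          mul_le_mul_of_nonneg_left hFa (by linarith)
        have hδεval : δε = ε / 2 * (-I₀ / 4) := by rw [hδεdef, habs]
        have hq : 0 < ε / 2 * (-I₀ / 4) := by
          apply mul_pos (by linarith); linarith
        have h1 : SA ua < 1 := by
          have := (abs_lt.1 hSAua).2
          rw [hδεval] at this
          linarith [hGua, hmula]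
        have h2 : (1:ℝ) < SA ub := by
          have := (abs_lt.1 hSAub).1
          rw [hδεval] at this
          linarith [hGub, hmulb]
        have := intermediate_value_Ioo huord hSAcont.continuousOn
        obtain ⟨tN, htN, htNv⟩ := this ⟨h1, h2⟩
        exact ⟨tN, htN, htNv⟩
      · -- I₀ > 0 : Gν decreasing, SA ub < 1 < SA ua
        have habs : |I₀| = I₀ := abs_of_pos hpos
        rw [habs] at hxb hxa
        have hFb : 3 * I₀ / 4 ≤ Fν (ub, t₀) := by
          have := (abs_le.1 hxb).1; linarith
        have hFa : 3 * I₀ / 4 ≤ Fν (ua, t₀) := by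
          have := (abs_le.1 hxa).1; linarith
        have hmulb : ε / 2 * (3 * I₀ / 4) ≤ ε / 2 * Fν (ub, t₀) :=
          mul_le_mul_of_nonneg_left hFb (by linarith)
        have hmula : ε / 2 * (3 * I₀ / 4) ≤ ε / 2 * Fν (ua, t₀) :=
          mul_le_mul_of_nonneg_left hFa (by linarith)
        have hδεval : δε = ε / 2 * (I₀ / 4) := by rw [hδεdef, habs]
        have hq : 0 < ε / 2 * (I₀ / 4) := by
          apply mul_pos (by linarith); linarith
        have h1 : SA ub < 1 := by
          have := (abs_lt.1 hSAub).2
          rw [hδεval] at this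
          linarith [hGub, hmulb]
        have h2 : (1:ℝ) < SA ua := by
          have := (abs_lt.1 hSAua).1
          rw [hδεval] at this
          linarith [hGua, hmula]
        have := intermediate_value_Ioo' huord hSAcont.continuousOn
        obtain ⟨tN, htN, htNv⟩ := this ⟨h1, h2⟩
        exact ⟨tN, htN, htNv⟩
    have htNIoo : tN ∈ Set.Ioo (t₀ - ε) (t₀ + ε) := by
      obtain ⟨ha, hb⟩ := htNmem
      rw [huadef] at ha; rw [hubdef] at hb
      exact ⟨by linarith, by linarith⟩
    have htN₀ : |tN - t₀| ≤ ε₀ := by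
      obtain ⟨ha, hb⟩ := htNmem
      rw [huadef] at ha; rw [hubdef] at hb
      rw [abs_le]; constructor <;> linarith
    have htNε₁ : |tN - t₀| ≤ ε₁ := htN₀.trans hε₀le₁
    refine ⟨tN, htNIoo, ?_, ?_, ?_⟩
    · rw [hraw tN htNε₁]; exact htNval
    · -- uniqueness
      intro t' ht' hroot
      obtain ⟨ha', hb'⟩ := ht'
      have ht'₀ : |t' - t₀| ≤ ε₀ := by
        rw [abs_le]; constructor <;> linarith
      have ht'ε₁ : |t' - t₀| ≤ ε₁ := ht'₀.trans hε₀le₁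
      have hSA' : SA t' = 1 := by rw [← hraw t' ht'ε₁]; exact hroot
      have hz' : (t', tN) ∈ Qs := hQmem _ ht'₀ htN₀
      have hFAz : FA N (t', tN) = (N:ℝ)⁻¹ *
          ((∑ j, (k j : ℝ) * psiK ρ t' tN (θ j)) +
            ∑ i ∈ Finset.range (N - r), psiK ρ t' tN (β N i)) := by
        rw [hFAval]
        exact integral_muA_eq θ k β (μA N) hμAeq _
      have hsum1 : (∑ j, (k j : ℝ) * qc ρ (t' - θ j)) - ∑ j, (k j : ℝ) * qc ρ (tN - θ j)
          = (tN - t') * ∑ j, (k j : ℝ) * psiK ρ t' tN (θ j) := by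
        rw [← Finset.sum_sub_distrib, Finset.mul_sum]
        apply Finset.sum_congr rfl
        intro j _
        rw [← mul_sub,
          psiK_identity hρ (hfar t' (θ j) ht'ε₁ (hθT j)) (hfar tN (θ j) htNε₁ (hθT j))]
        ring
      have hsum2 : (∑ i ∈ Finset.range (N - r), qc ρ (t' - β N i))
            - ∑ i ∈ Finset.range (N - r), qc ρ (tN - β N i)
          = (tN - t') * ∑ i ∈ Finset.range (N - r), psiK ρ t' tN (β N i) := by
        rw [← Finset.sum_sub_distrib, Finset.mul_sum]
        apply Finset.sum_congr rfl
        intro i hi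
        exact psiK_identity hρ (hfarβ (β N i) (hN2 i hi) t' ht'ε₁)
          (hfarβ (β N i) (hN2 i hi) tN htNε₁)
      have hId : SA t' - SA tN = (tN - t') * FA N (t', tN) := by
        rw [hSAval t', hSAval tN, hFAz]
        linear_combination (N:ℝ)⁻¹ * hsum1 + (N:ℝ)⁻¹ * hsum2
      have hFAne : FA N (t', tN) ≠ 0 := by
        have h1 := hN3 _ hz'
        have h2 := hQlow _ hz'
        intro h0
        rw [h0] at h1
        rw [abs_sub_comm, sub_zero] at h1
        linarith
      have hzero : (tN - t') * FA N (t', tN) = 0 := by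
        rw [← hId, hSA', htNval]; ring
      rcases mul_eq_zero.1 hzero with h | h
      · linarith [h]
      · exact absurd h hFAne
    · -- fixed point identity
      have hzQ : (tN, t₀) ∈ Qs := hQmem _ htN₀ (by simpa using hε₀pos.le)
      have hFzlow := hQlow _ hzQ
      have hFzne : Fν (tN, t₀) ≠ 0 := by
        intro h0
        rw [h0, abs_zero] at hFzlow
        linarith
      have hG := hGdiff tN htNε₁
      rw [hGt₀] at hG
      have hν : ∫ x, ((tN - x) ^ 2)⁻¹ ∂ν = Gν tN := by
        rw [hGνval]
        apply integral_congr_ae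
        filter_upwards [haeS tN htNε₁] with x hx
        rw [qc_eq hρ hx]
      have hhat : ∫ x, ((tN - x) ^ 2)⁻¹ ∂(hatNu r β N)
          = ((N - r : ℕ):ℝ)⁻¹ * ∑ i ∈ Finset.range (N - r), ((tN - β N i) ^ 2)⁻¹ :=
        integral_hatNu r β N _
      have hθsum : ∑ j, (k j : ℝ) / (tN - θ j) ^ 2
          = ∑ j, (k j : ℝ) * qc ρ (tN - θ j) := by
        apply Finset.sum_congr rfl
        intro j _
        rw [qc_eq hρ (hfar tN (θ j) htNε₁ (hθT j)), div_eq_mul_inv]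
      have hβsum : ∑ i ∈ Finset.range (N - r), ((tN - β N i) ^ 2)⁻¹
          = ∑ i ∈ Finset.range (N - r), qc ρ (tN - β N i) := by
        apply Finset.sum_congr rfl
        intro i hi
        rw [qc_eq hρ (hfarβ (β N i) (hN2 i hi) tN htNε₁)]
      have hbracket : ((N - r : ℕ) : ℝ) / N * (∫ x, ((tN - x) ^ 2)⁻¹ ∂(hatNu r β N))
            - (∫ x, ((tN - x) ^ 2)⁻¹ ∂ν)
            + (N : ℝ)⁻¹ * ∑ j, (k j : ℝ) / (tN - θ j) ^ 2
          = 1 - Gν tN := by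
        rw [hhat, hν, hθsum, hβsum, ← htNval, hSAval tN]
        have hNr0 : ((N - r : ℕ):ℝ) ≠ 0 := hNrpos.ne'
        rw [div_mul_eq_mul_div, ← mul_assoc, mul_inv_cancel₀ hNr0, one_mul, div_eq_inv_mul]
        ring
      have hWtN : hWeight ν t₀ tN = (Fν (tN, t₀))⁻¹ := hWeq tN htNε₁
      show tN = t₀ + fN ν r θ k β t₀ N tN
      rw [fN, hWtN, hbracket]
      have h1 : 1 - Gν tN = (tN - t₀) * Fν (tN, t₀) := by linarith
      rw [h1]
      field_simp
      ring
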